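/- The generalized ZH-monoid is invariant under all permutations of its inputs: for every n ≥ 1 and every permutation σ of Fin n, Mₙ * P_σ = Mₙ, where P_σ : Matrix (Fin n → Fin 2) (Fin n → Fin 2) ℂ is the permutation matrix permuting the n tensor factors of (ℂ²)^⊗n according to σ (P_σ sends the basis vector e_x to e_{x ∘ σ⁻¹}). -/
import Mathlib


open Kronecker Matrix

/-- The ZH-monoid `M`, determined on the standard basis by
`M|00⟩ = |0⟩`, `M|01⟩ = |1⟩`, `M|10⟩ = |1⟩`, `M|11⟩ = 0`. -/
def ZHmonoid : Matrix (Fin 2) (Fin 2 × Fin 2) ℂ :=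
  Matrix.of fun i p =>
    if p = (0, 0) then ![1, 0] i
    else if p = (1, 1) then 0
    else ![0, 1] i

/-- The generalized ZH-monoid `Mₙ`, defined inductively by `M₁ = I₂` and
`M_{n+1} = M * (I₂ ⊗ₖ Mₙ)`, using the canonical identification of
`Fin 2 × (Fin n → Fin 2)` with `Fin (n+1) → Fin 2`. -/
noncomputable def genMonoid : (n : ℕ) → Matrix (Fin 2) (Fin n → Fin 2) ℂ
  | 0 => Matrix.of fun i _ => if i = 0 then 1 else 0
  | 1 => Matrix.reindex (Equiv.refl (Fin 2)) (Equiv.funUnique (Fin 1) (Fin 2)).symm 1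
  | (n + 2) =>
    Matrix.reindex (Equiv.refl (Fin 2)) (Fin.consEquiv fun _ => Fin 2)
      (ZHmonoid * ((1 : Matrix (Fin 2) (Fin 2) ℂ) ⊗ₖ genMonoid (n + 1)))
  termination_by n => n

/-- The permutation matrix `P_σ` permuting the `n` tensor factors of `(ℂ²)^⊗n`
according to `σ`: it sends the basis vector `e_x` to `e_{x ∘ σ⁻¹}`. -/
def permMatrix (n : ℕ) (σ : Equiv.Perm (Fin n)) :
    Matrix (Fin n → Fin 2) (Fin n → Fin 2) ℂ :=
  Matrix.of fun y x => if y = x ∘ ⇑σ⁻¹ then 1 else 0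

/-- The value of `genMonoid n i x` as a function of the number of ones in `x`. -/
def f2 : Fin 2 → ℕ → ℂ := fun i k =>
  if k = 0 then (if i = 0 then 1 else 0) else if k = 1 then (if i = 1 then 1 else 0) else 0

lemma genMonoid_apply : ∀ (n : ℕ) (i : Fin 2) (x : Fin n → Fin 2),
    genMonoid n i x = f2 i (∑ j, (x j : ℕ)) := by
  intro n
  induction n with
  | zero => intro i x; simp [genMonoid, f2]
  | succ m ih =>
    cases m with
    | zero =>
      intro i x
      rw [genMonoid]
      simp only [reindex_apply, Equiv.refl_symm, Equiv.refl_apply, Equiv.symm_symm,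
        submatrix_apply, Equiv.funUnique_apply, one_apply]
      rw [show (∑ j, ((x j : ℕ))) = (x 0 : ℕ) by simp]
      have h : x 0 = 0 ∨ x 0 = 1 := by omega
      rcases h with h | h <;> fin_cases i <;> simp [f2, h]
    | succ k =>
      intro i x
      rw [genMonoid]
      simp only [reindex_apply, Equiv.refl_symm, Equiv.refl_apply, submatrix_apply]
      rw [show (Fin.consEquiv fun _ : Fin (k+2) => Fin 2).symm x = (x 0, Fin.tail x) by
        rw [Equiv.symm_apply_eq]; exact (Fin.cons_self_tail x).symm]
      rw [mul_apply, Fintype.sum_prod_type]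
      simp only [kroneckerMap_apply, Fin.sum_univ_two, one_apply, ih]
      rw [show (∑ j : Fin (k+2), (x j : ℕ)) = (x 0 : ℕ) + ∑ j, (Fin.tail x j : ℕ) from by
        rw [Fin.sum_univ_succ]; rfl]
      have h : x 0 = 0 ∨ x 0 = 1 := by omega
      rcases h with h | h <;> rw [h] <;> fin_cases i <;> simp [ZHmonoid, f2]

/-- The generalized ZH-monoid is invariant under all permutations of its inputs:
for every `n ≥ 1` and every permutation `σ` of `Fin n`, `Mₙ * P_σ = Mₙ`. -/
theorem genMonoid_perm_invariant (n : ℕ) (hn : 1 ≤ n) (σ : Equiv.Perm (Fin n)) :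
    genMonoid n * permMatrix n σ = genMonoid n := by
  ext i x
  rw [mul_apply]
  simp only [permMatrix, of_apply, mul_ite, mul_one, mul_zero]
  rw [Finset.sum_ite_eq' Finset.univ (x ∘ ⇑σ⁻¹)]
  simp only [Finset.mem_univ, if_true]
  rw [genMonoid_apply, genMonoid_apply]
  congr 1
  exact Equiv.sum_comp σ⁻¹ (fun j => ((x j : ℕ)))
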